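/- Let e₀ be a positive integer, and let c : ℕ → ℚ_p be a sequence such that v_p(c_k) ≥ ⌊k/p⌋ + 1 - ⌊log_p(k·e₀)⌋ for all k ≥ 1, where v_p is the p-adic valuation. Let u ∈ K satisfy ‖u‖ < p^{1/p}. Then the series Σ_{k ≥ 1} c_k·u^k converges in K. -/

import Mathlib

set_option maxHeartbeats 1000000


/-- Convergence of the overconvergent functions `f_{i,0}` outside the closed disk
`v_p(r(x)) ≥ 1/p`: if `v_p(c_k) ≥ ⌊k/p⌋ + 1 - ⌊log_p(k e₀)⌋` for `k ≥ 1` (expressed via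
`‖c_k‖ ≤ p^{-(⌊k/p⌋ + 1 - ⌊log_p(k e₀)⌋)}`) and `‖u‖ < p^{1/p}`, then `Σ_{k≥1} c_k u^k`
converges. -/
theorem overconvergent_summable {p : ℕ} [Fact p.Prime] {K : Type*} [NormedField K]
    [CompleteSpace K] [Algebra ℚ_[p] K]
    (hna : ∀ x y : K, ‖x + y‖ ≤ max ‖x‖ ‖y‖)
    (hiso : ∀ a : ℚ_[p], ‖algebraMap ℚ_[p] K a‖ = ‖a‖)
    (e₀ : ℕ) (he₀ : 0 < e₀)
    (c : ℕ → ℚ_[p])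
    (hc : ∀ k : ℕ, 1 ≤ k →
      ‖c k‖ ≤ (p : ℝ) ^ (-(((k / p : ℕ) : ℤ) + 1 - (Nat.log p (k * e₀) : ℤ))))
    (u : K) (hu : ‖u‖ < (p : ℝ) ^ ((1 : ℝ) / p)) :
    Summable (fun k : ℕ => algebraMap ℚ_[p] K (c (k + 1)) * u ^ (k + 1)) := by
  have hp : p.Prime := Fact.out
  have hp1 : (1:ℝ) < p := by exact_mod_cast hp.one_lt
  have hp0 : (0:ℝ) < p := by positivity
  set ρ : ℝ := ‖u‖ * (p:ℝ) ^ (-(1:ℝ)/p) with hρ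
  have hρ0 : 0 ≤ ρ := by positivity
  have hρ1 : ρ < 1 := by
    have h1 : (p:ℝ) ^ (-(1:ℝ)/p) = ((p:ℝ) ^ ((1:ℝ)/p))⁻¹ := by
      rw [← Real.rpow_neg hp0.le]; ring_nf
    rw [hρ, h1, mul_inv_lt_iff₀ (by positivity), one_mul]
    exact hu
  have hsum : Summable (fun k : ℕ => (e₀:ℝ) * (((k+1 : ℕ):ℝ) * ρ ^ (k+1))) := by
    have h : Summable (fun n : ℕ => (n:ℝ)^1 * ρ^n) :=
      summable_pow_mul_geometric_of_norm_lt_one 1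
        (by rwa [Real.norm_eq_abs, abs_of_nonneg hρ0])
    have h2 : Summable (fun k : ℕ => ((k+1 : ℕ):ℝ)^1 * ρ^(k+1)) :=
      (summable_nat_add_iff 1).mpr h
    simpa [pow_one] using h2.mul_left (e₀:ℝ)
  apply Summable.of_norm_bounded hsum
  intro k
  set m := k + 1 with hm
  have hm1 : 1 ≤ m := Nat.le_add_left 1 k
  set L := Nat.log p (m * e₀) with hL
  set q := m / p with hq
  have hnorm : ‖algebraMap ℚ_[p] K (c m) * u ^ m‖ = ‖c m‖ * ‖u‖ ^ m := by
    rw [norm_mul, hiso, norm_pow]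
  rw [hnorm]
  have hc' := hc m hm1
  have hzp : (p:ℝ) ^ (-((q:ℤ) + 1 - (L:ℤ))) = (p:ℝ) ^ ((L:ℝ) - q - 1) := by
    rw [← Real.rpow_intCast]
    congr 1
    push_cast; ring
  rw [hzp] at hc'
  have h5 : m < (q+1)*p := by
    have h7 := Nat.mod_lt m hp.pos
    calc m = p * q + m % p := (Nat.div_add_mod m p).symm
      _ < p * q + p := Nat.add_lt_add_left h7 _
      _ = (q+1)*p := by ring
  have hexp : (L:ℝ) - q - 1 ≤ (L:ℝ) - m / p := by
    have hqp : (m:ℝ) / p ≤ (q:ℝ) + 1 := by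
      rw [div_le_iff₀ hp0]
      exact_mod_cast h5.le
    linarith
  have h2 : ‖c m‖ ≤ (p:ℝ) ^ ((L:ℝ) - m/p) :=
    hc'.trans (Real.rpow_le_rpow_of_exponent_le hp1.le hexp)
  have h3 : (p:ℝ) ^ ((L:ℝ) - (m:ℝ)/p) = (p:ℝ)^(L:ℝ) * ((p:ℝ) ^ (-(1:ℝ)/p))^m := by
    rw [← Real.rpow_natCast ((p:ℝ) ^ (-(1:ℝ)/p)) m, ← Real.rpow_mul hp0.le,
      ← Real.rpow_add hp0]
    ring_nf
  have h4 : (p:ℝ)^(L:ℝ) ≤ ((m*e₀ : ℕ) : ℝ) := by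
    rw [Real.rpow_natCast]
    exact_mod_cast Nat.pow_log_le_self p (by positivity)
  calc ‖c m‖ * ‖u‖ ^ m
      ≤ ((p:ℝ)^(L:ℝ) * ((p:ℝ)^(-(1:ℝ)/p))^m) * ‖u‖^m := by
        rw [← h3]; exact mul_le_mul_of_nonneg_right h2 (by positivity)
    _ = (p:ℝ)^(L:ℝ) * ρ^m := by rw [hρ, mul_pow]; ring
    _ ≤ ((m*e₀ : ℕ):ℝ) * ρ^m := mul_le_mul_of_nonneg_right h4 (by positivity)
    _ = (e₀:ℝ) * ((m:ℝ) * ρ^m) := by push_cast; ring
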